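/- Let f = n/d be an irreducible strictly proper rational function over ℂ of degree 2k with k ≥ 1. Then there exist 2k pairwise distinct points λ̃_1,…,λ̃_k, σ̃_1,…,σ̃_k ∈ ℂ, none of which is a root of d, values h̃_1,…,h̃_k ∈ ℂ with n(λ̃_j) = h̃_j·d(λ̃_j) and n(σ̃_j) = h̃_j·d(σ̃_j) for every j, and weights w̃_1,…,w̃_{2k} ∈ ℂ such that f(s) = (Σ_{j=1}^k (h̃_j w̃_j/(s−λ̃_j) + h̃_j w̃_{j+k}/(s−σ̃_j))) / (1 + Σ_{j=1}^k (w̃_j/(s−λ̃_j) + w̃_{j+k}/(s−σ̃_j))) as rational functions. -/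

import Mathlib

open Polynomial BigOperators

private lemma eval_ne_of_not_mem_roots {p : ℂ[X]} (hp : p ≠ 0) {z : ℂ}
    (hz : z ∉ p.roots.toFinset) : p.eval z ≠ 0 := fun h =>
  hz (Multiset.mem_toFinset.mpr ((mem_roots hp).mpr h))

private lemma exists_pts (n d W : Polynomial ℂ) (hd : d ≠ 0) (hn : n ≠ 0) (hW : W ≠ 0)
    (hprop : n.degree < d.degree) (k : ℕ) :
    ∃ lam : Fin k → ℂ,
      Function.Injective lam ∧
      (∀ j, d.eval (lam j) ≠ 0 ∧ n.eval (lam j) ≠ 0 ∧ W.eval (lam j) ≠ 0) ∧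
      (∀ i j, i ≠ j → n.eval (lam i) * d.eval (lam j) ≠ n.eval (lam j) * d.eval (lam i)) := by
  induction k with
  | zero => exact ⟨Fin.elim0, fun i => i.elim0, fun i => i.elim0, fun i => i.elim0⟩
  | succ k ih =>
    obtain ⟨lam, hinj, hev, hpair⟩ := ih
    -- nonzero "equal f-value" polynomials
    have hpne : ∀ i : Fin k, C (d.eval (lam i)) * n - C (n.eval (lam i)) * d ≠ 0 := by
      intro i
      have h1 : (C (d.eval (lam i)) * n).degree < (C (n.eval (lam i)) * d).degree := by
        rw [degree_C_mul (hev i).1, degree_C_mul (hev i).2.1]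
        exact hprop
      exact sub_ne_zero.mpr (fun h => h1.ne (congrArg degree h))
    set B : Finset ℂ := d.roots.toFinset ∪ n.roots.toFinset ∪ W.roots.toFinset ∪
      Finset.image lam Finset.univ ∪
      Finset.univ.biUnion
        (fun i => (C (d.eval (lam i)) * n - C (n.eval (lam i)) * d).roots.toFinset) with hB
    obtain ⟨z, hz⟩ := Infinite.exists_notMem_finset B
    have hzd : z ∉ d.roots.toFinset := fun h => hz (by simp [hB, h])
    have hzn : z ∉ n.roots.toFinset := fun h => hz (by simp [hB, h])
    have hzW : z ∉ W.roots.toFinset := fun h => hz (by simp [hB, h])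
    have hzr : z ∉ Set.range lam := by
      rintro ⟨i, rfl⟩
      exact hz (by simp [hB])
    have hzp : ∀ i : Fin k, (C (d.eval (lam i)) * n - C (n.eval (lam i)) * d).eval z ≠ 0 := by
      intro i
      refine eval_ne_of_not_mem_roots (hpne i) (fun h => hz ?_)
      simp only [hB, Finset.mem_union, Finset.mem_biUnion]
      exact Or.inr ⟨i, Finset.mem_univ i, h⟩
    have hcross : ∀ i : Fin k, n.eval z * d.eval (lam i) ≠ n.eval (lam i) * d.eval z := by
      intro i h
      apply hzp i
      simp only [eval_sub, eval_mul, eval_C]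
      linear_combination h
    refine ⟨Fin.cons z lam, ?_, ?_, ?_⟩
    · exact Fin.cons_injective_iff.mpr ⟨hzr, hinj⟩
    · intro j
      refine Fin.cases ?_ ?_ j
      · exact ⟨eval_ne_of_not_mem_roots hd hzd, eval_ne_of_not_mem_roots hn hzn,
          eval_ne_of_not_mem_roots hW hzW⟩
      · intro i; simpa using hev i
    · intro i j hij
      rcases Fin.eq_zero_or_eq_succ i with rfl | ⟨i', rfl⟩ <;>
        rcases Fin.eq_zero_or_eq_succ j with rfl | ⟨j', rfl⟩
      · exact absurd rfl hij
      · simpa using hcross j'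
      · simp only [Fin.cons_succ, Fin.cons_zero]
        exact fun h => hcross i' h.symm
      · exact by simpa using hpair i' j' (fun h => hij (by rw [h]))

private lemma exists_sigma (k : ℕ) (hk : 1 ≤ k) (n d : Polynomial ℂ) (hd : d ≠ 0)
    (hirr : IsCoprime n d) (hprop : n.degree < d.degree) (hdeg : d.natDegree = 2 * k)
    (lam : ℂ) (hdl : d.eval lam ≠ 0) (hnl : n.eval lam ≠ 0)
    (hWl : (n * derivative d - derivative n * d).eval lam ≠ 0) :
    ∃ sig : ℂ, sig ≠ lam ∧ d.eval sig ≠ 0 ∧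
      n.eval sig = (n.eval lam / d.eval lam) * d.eval sig := by
  set h := n.eval lam / d.eval lam with hh
  have hh0 : h ≠ 0 := div_ne_zero hnl hdl
  have hnlam : n.eval lam = h * d.eval lam := (div_mul_cancel₀ _ hdl).symm
  set p := C h * d - n with hp
  have hdegCd : (C h * d).degree = d.degree := degree_C_mul hh0
  have hdp : p.degree = d.degree := by
    rw [hp, degree_sub_eq_left_of_degree_lt (hdegCd ▸ hprop), hdegCd]
  have hp0 : p ≠ 0 := by
    intro h0; rw [h0, degree_zero] at hdp; exact hd (degree_eq_bot.mp hdp.symm)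
  have hroot : p.IsRoot lam := by
    simp only [hp, IsRoot, eval_sub, eval_mul, eval_C, hnlam]; ring
  obtain ⟨q, hq⟩ := dvd_iff_isRoot.mpr hroot
  have hq0 : q ≠ 0 := by rintro rfl; rw [mul_zero] at hq; exact hp0 hq
  have hndp : p.natDegree = 2 * k := by
    rw [natDegree_eq_of_degree_eq hdp, hdeg]
  have hmul := natDegree_mul (X_sub_C_ne_zero lam) hq0
  rw [← hq, natDegree_X_sub_C] at hmul
  have hndq : q.natDegree = 2 * k - 1 := by omega
  have hdegq : 0 < q.degree := by
    rw [← natDegree_pos_iff_degree_pos]; omega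
  obtain ⟨s, hs⟩ := Complex.exists_root hdegq
  have hqlam : q.eval lam ≠ 0 := by
    have hder : derivative p = q + (X - C lam) * derivative q := by
      rw [hq, derivative_mul, derivative_sub, derivative_X, derivative_C]; ring
    have h1 : (derivative p).eval lam = q.eval lam := by
      simp [hder]
    have h2 : (derivative p).eval lam
        = h * (derivative d).eval lam - (derivative n).eval lam := by
      simp [hp, derivative_sub]
    intro h0
    apply hWl
    have h3 : h * (derivative d).eval lam = (derivative n).eval lam := by
      have := h1.symm.trans h2
      rw [h0] at this
      linear_combination -this
    simp only [eval_sub, eval_mul]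
    rw [hnlam]
    linear_combination (d.eval lam) * h3
  have hslam : s ≠ lam := fun e => hqlam (e ▸ hs)
  have hnps : p.eval s = 0 := by
    rw [hq, eval_mul, hs.eq_zero, mul_zero]
  have hds : d.eval s ≠ 0 := by
    intro h0
    have hns : n.eval s = 0 := by
      have h4 := hnps
      simp only [hp, eval_sub, eval_mul, eval_C, h0, mul_zero, zero_sub, neg_eq_zero] at h4
      exact h4
    obtain ⟨a, b, hab⟩ := hirr
    have h5 := congrArg (eval s) hab
    simp [hns, h0] at h5
  refine ⟨s, hslam, hds, ?_⟩
  have h6 := hnps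
  simp only [hp, eval_sub, eval_mul, eval_C] at h6
  linear_combination -h6

private lemma exists_weights (N2 : ℕ) (n d : Polynomial ℂ) (hd : d ≠ 0)
    (hirr : IsCoprime n d) (hdegd : d.degree = (N2 : ℕ)) (hprop : n.degree < d.degree)
    {ι : Type} [Fintype ι] [DecidableEq ι] [Nonempty ι] (hcard : Fintype.card ι = N2)
    (μ H : ι → ℂ) (hμ : Function.Injective μ)
    (hroot : ∀ i, n.eval (μ i) = H i * d.eval (μ i)) :
    ∃ (c : ι → ℂ) (q : ι → Polynomial ℂ),
      (∀ i, C (H i) * d - n = (X - C (μ i)) * q i) ∧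
      (∑ i, C (c i) * q i) = n := by
  have hdvd : ∀ i, (X - C (μ i)) ∣ (C (H i) * d - n) := fun i =>
    dvd_iff_isRoot.mpr (by simp only [IsRoot, eval_sub, eval_mul, eval_C, hroot i]; ring)
  choose q hq using hdvd
  have hmem : ∀ i, q i ∈ degreeLT ℂ N2 := by
    intro i
    rw [mem_degreeLT]
    by_cases h0 : q i = 0
    · rw [h0, degree_zero]; exact WithBot.bot_lt_coe _
    · have hC : (C (H i) * d).degree ≤ d.degree := by
        refine le_trans (degree_mul_le _ _) ?_
        calc (C (H i)).degree + d.degree ≤ 0 + d.degree :=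
              add_le_add degree_C_le le_rfl
          _ = d.degree := zero_add _
      have hple : (C (H i) * d - n).degree ≤ (N2 : WithBot ℕ) :=
        le_trans (degree_sub_le _ _) (max_le (hC.trans hdegd.le) (hprop.le.trans hdegd.le))
      have hnat : (C (H i) * d - n).natDegree ≤ N2 := natDegree_le_iff_degree_le.mpr hple
      have hmul := natDegree_mul (X_sub_C_ne_zero (μ i)) h0
      rw [← hq i, natDegree_X_sub_C] at hmul
      rw [← natDegree_lt_iff_degree_lt h0]
      omega
  set v : ι → degreeLT ℂ N2 := fun i => ⟨q i, hmem i⟩ with hv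
  have hli : LinearIndependent ℂ v := by
    rw [Fintype.linearIndependent_iff]
    intro g hg
    have hg' : ∑ i, C (g i) * q i = 0 := by
      have h1 := congrArg Subtype.val hg
      rw [AddSubmonoidClass.coe_finset_sum] at h1
      simpa [hv, smul_eq_C_mul] using h1
    set Dh : Polynomial ℂ :=
      ∑ i, C (g i) * ∏ l ∈ Finset.univ.erase i, (X - C (μ l)) with hDh
    have hterm : ∀ i : ι,
        d * (C (g i) * C (H i) * ∏ l ∈ Finset.univ.erase i, (X - C (μ l)))
          - n * (C (g i) * ∏ l ∈ Finset.univ.erase i, (X - C (μ l)))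
        = (∏ l, (X - C (μ l))) * (C (g i) * q i) := by
      intro i
      have hPe : (X - C (μ i)) * ∏ l ∈ Finset.univ.erase i, (X - C (μ l))
          = ∏ l, (X - C (μ l)) :=
        Finset.mul_prod_erase Finset.univ (fun l => X - C (μ l)) (Finset.mem_univ i)
      linear_combination (C (g i) * (∏ l ∈ Finset.univ.erase i, (X - C (μ l)))) * (hq i)
        + (C (g i) * q i) * hPe
    have key : n * Dh
        = d * ∑ i, C (g i) * C (H i) * ∏ l ∈ Finset.univ.erase i, (X - C (μ l)) := by
      have h2 : d * (∑ i, C (g i) * C (H i) * ∏ l ∈ Finset.univ.erase i, (X - C (μ l)))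
          - n * Dh = (∏ l, (X - C (μ l))) * ∑ i, C (g i) * q i := by
        rw [hDh, Finset.mul_sum, Finset.mul_sum, Finset.mul_sum, ← Finset.sum_sub_distrib]
        exact Finset.sum_congr rfl fun i _ => hterm i
      rw [hg', mul_zero] at h2
      linear_combination -h2
    have hdvdD : d ∣ Dh :=
      hirr.symm.dvd_of_dvd_mul_left ⟨_, key⟩
    have hdegDh : Dh.degree < d.degree := by
      rw [hdegd, hDh]
      refine lt_of_le_of_lt (degree_sum_le _ _) ?_
      rw [Finset.sup_lt_iff (WithBot.bot_lt_coe _)]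
      intro i _
      refine lt_of_le_of_lt (degree_mul_le _ _) ?_
      have hE : (∏ l ∈ Finset.univ.erase i, (X - C (μ l))).degree
          = ((Finset.univ.erase i).card : WithBot ℕ) := by
        rw [degree_prod]
        simp [degree_X_sub_C]
      refine lt_of_le_of_lt (add_le_add degree_C_le le_rfl) ?_
      rw [zero_add, hE, Finset.card_erase_of_mem (Finset.mem_univ i), Finset.card_univ, hcard]
      have hN2 : 0 < N2 := by
        rw [← hcard]
        exact Fintype.card_pos
      exact_mod_cast Nat.sub_lt hN2 one_pos
    have hD0 : Dh = 0 := eq_zero_of_dvd_of_degree_lt hdvdD hdegDh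
    intro i
    have h7 : Dh.eval (μ i) = 0 := by rw [hD0, eval_zero]
    rw [hDh, eval_finset_sum, Finset.sum_eq_single i] at h7
    · have hprod0 : ∏ l ∈ Finset.univ.erase i, (μ i - μ l) ≠ 0 := by
        rw [Finset.prod_ne_zero_iff]
        intro l hl
        exact sub_ne_zero.mpr fun e => (Finset.mem_erase.mp hl).1 (hμ e.symm)
      have h8 : g i * ∏ l ∈ Finset.univ.erase i, (μ i - μ l) = 0 := by
        simpa [eval_prod] using h7
      exact (mul_eq_zero.mp h8).resolve_right hprod0
    · intro b _ hbi
      simp only [eval_mul, eval_C, eval_prod, eval_sub, eval_X]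
      exact mul_eq_zero_of_right _
        (Finset.prod_eq_zero (Finset.mem_erase.mpr ⟨hbi.symm, Finset.mem_univ i⟩) (sub_self _))
    · intro hi; exact absurd (Finset.mem_univ i) hi
  have hfr : Module.finrank ℂ (degreeLT ℂ N2) = N2 :=
    (Polynomial.degreeLTEquiv ℂ N2).finrank_eq.trans (Module.finrank_fin_fun ℂ)
  have hspan := hli.span_eq_top_of_card_eq_finrank (by rw [hcard, hfr])
  have hnmem : (⟨n, mem_degreeLT.mpr (hprop.trans_le hdegd.le)⟩ : degreeLT ℂ N2)
      ∈ Submodule.span ℂ (Set.range v) := hspan ▸ Submodule.mem_top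
  obtain ⟨c, hc⟩ := (Submodule.mem_span_range_iff_exists_fun ℂ).mp hnmem
  refine ⟨c, q, hq, ?_⟩
  have h9 := congrArg Subtype.val hc
  rw [AddSubmonoidClass.coe_finset_sum] at h9
  simpa [hv, smul_eq_C_mul] using h9

/-- Any irreducible strictly proper rational function `f = n/d` of degree
`2k` admits an unstructured barycentric representation with `2k` pairwise distinct
support points `λ̃_1,…,λ̃_k, σ̃_1,…,σ̃_k` (none a pole of `f`) and only `k` distinct
function values `h̃_j = f(λ̃_j) = f(σ̃_j)`, each appearing twice: there are weights
`w̃_1,…,w̃_{2k}` (here `w1 j = w̃_j`, `w2 j = w̃_{j+k}`) with `n · D = d · N` for the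
cleared numerator `N` and denominator `D` of that barycentric form. -/
theorem stmt_4 (k : ℕ) (hk : 1 ≤ k) (n d : Polynomial ℂ) (hd : d ≠ 0)
    (hirr : IsCoprime n d) (hprop : n.degree < d.degree) (hdeg : d.natDegree = 2 * k) :
    ∃ (lamT sigT hT w1 w2 : Fin k → ℂ),
      Function.Injective lamT ∧ Function.Injective sigT ∧
      (∀ i j, lamT i ≠ sigT j) ∧
      (∀ j, d.eval (lamT j) ≠ 0) ∧ (∀ j, d.eval (sigT j) ≠ 0) ∧
      (∀ j, n.eval (lamT j) = hT j * d.eval (lamT j)) ∧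
      (∀ j, n.eval (sigT j) = hT j * d.eval (sigT j)) ∧
      n * ((∏ j, (X - C (lamT j)) * (X - C (sigT j))) +
            ∑ j, (C (w1 j) * (X - C (sigT j)) + C (w2 j) * (X - C (lamT j))) *
              ∏ l ∈ Finset.univ.erase j, (X - C (lamT l)) * (X - C (sigT l)))
        = d * (∑ j, C (hT j) * (C (w1 j) * (X - C (sigT j)) + C (w2 j) * (X - C (lamT j))) *
              ∏ l ∈ Finset.univ.erase j, (X - C (lamT l)) * (X - C (sigT l))) := by
  have hn0 : n ≠ 0 := by
    rintro rfl
    have h1 := natDegree_eq_zero_of_isUnit (isCoprime_zero_left.mp hirr)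
    omega
  have hW0 : n * derivative d - derivative n * d ≠ 0 := by
    intro h0
    have hd' : derivative d ≠ 0 := by
      intro hdd
      have := natDegree_eq_zero_of_derivative_eq_zero hdd
      omega
    have hdvd : d ∣ n * derivative d := ⟨derivative n, by linear_combination h0⟩
    exact hd' (eq_zero_of_dvd_of_degree_lt (hirr.symm.dvd_of_dvd_mul_left hdvd)
      (degree_derivative_lt hd))
  obtain ⟨lam, hlinj, hev, hpair⟩ :=
    exists_pts n d (n * derivative d - derivative n * d) hd hn0 hW0 hprop k
  choose sig hsig using fun j => exists_sigma k hk n d hd hirr hprop hdeg (lam j)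
    (hev j).1 (hev j).2.1 (hev j).2.2
  set h : Fin k → ℂ := fun j => n.eval (lam j) / d.eval (lam j) with hh
  have hnd : ∀ j, n.eval (lam j) = h j * d.eval (lam j) :=
    fun j => (div_mul_cancel₀ _ (hev j).1).symm
  have hnds : ∀ j, n.eval (sig j) = h j * d.eval (sig j) := fun j => (hsig j).2.2
  have hds : ∀ j, d.eval (sig j) ≠ 0 := fun j => (hsig j).2.1
  have hinjh : Function.Injective h := by
    intro i j hij
    by_contra hne
    apply hpair i j hne
    simp only [hh] at hij
    rw [div_eq_div_iff (hev i).1 (hev j).1] at hij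
    exact hij
  have hsinj : Function.Injective sig := by
    intro i j hij
    apply hinjh
    have h1 : h i * d.eval (sig j) = h j * d.eval (sig j) := by
      rw [← hnds j, ← hij, hnds i, hij]
    exact mul_right_cancel₀ (hds j) h1
  have hlams : ∀ i j, lam i ≠ sig j := by
    intro i j he
    have hhij : h i = h j := by
      refine mul_right_cancel₀ (hev i).1 ?_
      rw [← hnd i, he, hnds j]
    exact (hsig j).1 ((hinjh hhij ▸ he : lam j = sig j)).symm
  haveI : Nonempty (Fin k) := ⟨⟨0, hk⟩⟩
  have hμinj : Function.Injective (Sum.elim lam sig : Fin k ⊕ Fin k → ℂ) := by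
    rintro (i | i) (j | j) hij <;> simp only [Sum.elim_inl, Sum.elim_inr] at hij
    · rw [hlinj hij]
    · exact absurd hij (hlams i j)
    · exact absurd hij.symm (hlams j i)
    · rw [hsinj hij]
  have hdegd : d.degree = ((2 * k : ℕ) : WithBot ℕ) := by
    rw [degree_eq_natDegree hd, hdeg]
  have hcard : Fintype.card (Fin k ⊕ Fin k) = 2 * k := by
    rw [Fintype.card_sum, Fintype.card_fin]
    omega
  have hrootμ : ∀ i : Fin k ⊕ Fin k,
      n.eval (Sum.elim lam sig i) = Sum.elim h h i * d.eval (Sum.elim lam sig i) := by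
    rintro (j | j) <;> simp only [Sum.elim_inl, Sum.elim_inr]
    · exact hnd j
    · exact hnds j
  obtain ⟨c, q, hq, hcq⟩ := exists_weights (2 * k) n d hd hirr hdegd hprop hcard
    (Sum.elim lam sig) (Sum.elim h h) hμinj hrootμ
  have hqinl : ∀ j, C (h j) * d - n = (X - C (lam j)) * q (Sum.inl j) :=
    fun j => hq (Sum.inl j)
  have hqinr : ∀ j, C (h j) * d - n = (X - C (sig j)) * q (Sum.inr j) :=
    fun j => hq (Sum.inr j)
  refine ⟨lam, sig, h, fun j => c (Sum.inl j), fun j => c (Sum.inr j), hlinj, hsinj, hlams,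
    fun j => (hev j).1, hds, hnd, hnds, ?_⟩
  have hsum : ∑ j : Fin k, (C (h j) * d - n) *
      ((C (c (Sum.inl j)) * (X - C (sig j)) + C (c (Sum.inr j)) * (X - C (lam j))) *
        ∏ l ∈ Finset.univ.erase j, (X - C (lam l)) * (X - C (sig l)))
      = n * ∏ j, (X - C (lam j)) * (X - C (sig j)) := by
    have hper : ∀ j : Fin k, (C (h j) * d - n) *
        ((C (c (Sum.inl j)) * (X - C (sig j)) + C (c (Sum.inr j)) * (X - C (lam j))) *
          ∏ l ∈ Finset.univ.erase j, (X - C (lam l)) * (X - C (sig l)))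
        = (∏ l, (X - C (lam l)) * (X - C (sig l))) *
            (C (c (Sum.inl j)) * q (Sum.inl j) + C (c (Sum.inr j)) * q (Sum.inr j)) := by
      intro j
      have hPe : ((X - C (lam j)) * (X - C (sig j))) *
          ∏ l ∈ Finset.univ.erase j, (X - C (lam l)) * (X - C (sig l))
          = ∏ l, (X - C (lam l)) * (X - C (sig l)) :=
        Finset.mul_prod_erase Finset.univ
          (fun l => (X - C (lam l)) * (X - C (sig l))) (Finset.mem_univ j)
      linear_combination (C (c (Sum.inl j)) * (X - C (sig j)) *
          (∏ l ∈ Finset.univ.erase j, (X - C (lam l)) * (X - C (sig l)))) * hqinl j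
        + (C (c (Sum.inr j)) * (X - C (lam j)) *
          (∏ l ∈ Finset.univ.erase j, (X - C (lam l)) * (X - C (sig l)))) * hqinr j
        + (C (c (Sum.inl j)) * q (Sum.inl j) + C (c (Sum.inr j)) * q (Sum.inr j)) * hPe
    rw [Finset.sum_congr rfl (fun j _ => hper j), ← Finset.mul_sum]
    have hsplit : ∑ j : Fin k,
        (C (c (Sum.inl j)) * q (Sum.inl j) + C (c (Sum.inr j)) * q (Sum.inr j))
        = ∑ i : Fin k ⊕ Fin k, C (c i) * q i := by
      rw [Fintype.sum_sum_type, Finset.sum_add_distrib]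
    rw [hsplit, hcq, mul_comm]
  rw [mul_add, Finset.mul_sum, Finset.mul_sum, ← hsum, ← Finset.sum_add_distrib]
  exact Finset.sum_congr rfl fun j _ => by ring
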